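/- Let α ∈ [1,2], c > 0, and t ≥ 2. For ξ ∈ R^2 with 0 < |ξ| ≤ (1/4), the double integral ∫_1^t ∫_{2|ξ|}^1 e^{-c s ρ^α} dρ ds satisfies, after substituting ρ → ρ s^{-1/α}: ∫_1^t s^{-1/α} ∫_{2|ξ| s^{1/α}}^{s^{1/α}} e^{-cρ} dρ ds ≥ C ∫_1^{min(t, (4|ξ|)^{-α})} s^{-1/α} ds, and hence for |ξ| ≤ ε t^{-1/α} with ε ≤ 1/4, it is bounded below by C t^{1 - 1/α} when α ∈ (1,2] and by C ln t when α = 1. -/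

import Mathlib

open MeasureTheory Real

/-- lower bound for the double integral `∫_1^t ∫_{2|ξ|}^1 e^{-csρ^α} dρ ds`
when `|ξ| ≤ ε t^{-1/α}`: it is `≥ C t^{1-1/α}` for `α ∈ (1,2]` and `≥ C ln t` for `α = 1`. -/
theorem double_integral_lower_bound (α : ℝ) (hα₁ : 1 ≤ α) (hα₂ : α ≤ 2)
    (c : ℝ) (hc : 0 < c) :
    ∃ C > 0, ∀ t : ℝ, 2 ≤ t → ∀ ε : ℝ, 0 < ε → ε ≤ 1 / 4 →
      ∀ ξ : EuclideanSpace ℝ (Fin 2), 0 < ‖ξ‖ → ‖ξ‖ ≤ ε * t ^ (-1 / α) →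
        (1 < α →
          C * t ^ (1 - 1 / α) ≤
            ∫ s in Set.Icc 1 t, ∫ ρ in Set.Icc (2 * ‖ξ‖) 1,
              Real.exp (-c * s * ρ ^ α)) ∧
        (α = 1 →
          C * Real.log t ≤
            ∫ s in Set.Icc 1 t, ∫ ρ in Set.Icc (2 * ‖ξ‖) 1,
              Real.exp (-c * s * ρ ^ α)) := by
  refine ⟨Real.exp (-c) / 4, by positivity, ?_⟩
  intro t ht ε hε hε4 ξ hξ hξt
  have hα0 : (0:ℝ) < α := lt_of_lt_of_le one_pos hα₁
  have ht0 : (0:ℝ) < t := lt_of_lt_of_le two_pos ht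
  have hneg : (-1/α : ℝ) ≤ 0 := div_nonpos_of_nonpos_of_nonneg (by norm_num) hα0.le
  set a : ℝ := 2 * ‖ξ‖ with ha_def
  have ha0 : 0 < a := by positivity
  have hPt : 0 < t ^ (-1/α : ℝ) := Real.rpow_pos_of_pos ht0 _
  have hta : a ≤ t ^ (-1/α : ℝ) / 2 := by
    rw [ha_def]; nlinarith
  have htr1 : t ^ (-1/α : ℝ) ≤ 1 :=
    Real.rpow_le_one_of_one_le_of_nonpos (by linarith) hneg
  have ha1 : a ≤ 1 / 2 := by linarith
  set g : ℝ → ℝ := fun s => ∫ ρ in Set.Icc a 1, Real.exp (-c * s * ρ ^ α) with hg_def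
  -- measurability of g
  have hgm : StronglyMeasurable g := by
    have hF : Measurable fun p : ℝ × ℝ => Real.exp (-c * p.1 * p.2 ^ α) := by
      apply Measurable.exp
      exact (measurable_fst.const_mul (-c)).mul
        ((Real.continuous_rpow_const hα0.le).comp continuous_snd).measurable
    exact hF.stronglyMeasurable.integral_prod_right'
  -- nonnegativity of g
  have hg0 : ∀ s : ℝ, 0 ≤ g s := fun s =>
    integral_nonneg fun ρ => (Real.exp_pos _).le
  -- bound on g
  have hgb : ∀ s : ℝ, 0 ≤ s → ‖g s‖ ≤ 1 := by
    intro s hs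
    have h1 : ‖g s‖ ≤ 1 * (volume (Set.Icc a 1)).toReal := by
      apply norm_setIntegral_le_of_norm_le_const measure_Icc_lt_top
      intro ρ hρ
      rw [Real.norm_eq_abs, abs_of_pos (Real.exp_pos _)]
      have hρα : 0 ≤ ρ ^ α := Real.rpow_nonneg (le_trans ha0.le hρ.1) α
      have h2 : 0 ≤ c * s * ρ ^ α := mul_nonneg (mul_nonneg hc.le hs) hρα
      apply Real.exp_le_one_iff.mpr
      nlinarith
    rw [Real.volume_Icc, ENNReal.toReal_ofReal (by linarith)] at h1
    linarith
  -- integrability of g on compact intervals of [0,∞)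
  have hgi : ∀ u v : ℝ, 0 ≤ u → IntegrableOn g (Set.Icc u v) := by
    intro u v hu
    refine Integrable.mono' (g := fun _ => (1:ℝ))
      (integrableOn_const measure_Icc_lt_top.ne)
      hgm.aestronglyMeasurable.restrict ?_
    filter_upwards [ae_restrict_mem measurableSet_Icc] with s hs
    exact hgb s (le_trans hu hs.1)
  -- inner lower bound
  have hinner : ∀ s : ℝ, 1 ≤ s → s ≤ t →
      Real.exp (-c) / 2 * s ^ (-1/α : ℝ) ≤ g s := by
    intro s hs1 hst
    have hs0 : (0:ℝ) < s := lt_of_lt_of_le one_pos hs1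
    set b : ℝ := s ^ (-1/α : ℝ) with hb_def
    have hb0 : 0 < b := Real.rpow_pos_of_pos hs0 _
    have hb1 : b ≤ 1 := Real.rpow_le_one_of_one_le_of_nonpos hs1 hneg
    have htb : t ^ (-1/α : ℝ) ≤ b := Real.rpow_le_rpow_of_nonpos hs0 hst hneg
    have hab : a ≤ b / 2 := by linarith
    have hcont : ContinuousOn (fun ρ : ℝ => Real.exp (-c * s * ρ ^ α)) (Set.Icc a 1) := by
      intro ρ hρ
      have hρ0 : 0 < ρ := lt_of_lt_of_le ha0 hρ.1
      exact ((continuousAt_const.mul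
        (Real.continuousAt_rpow_const ρ α (Or.inl hρ0.ne'))).rexp).continuousWithinAt
    have hfi : IntegrableOn (fun ρ : ℝ => Real.exp (-c * s * ρ ^ α)) (Set.Icc a 1) :=
      hcont.integrableOn_compact isCompact_Icc
    have hsub : Set.Icc a b ⊆ Set.Icc a 1 := Set.Icc_subset_Icc le_rfl hb1
    have h1 : ∫ ρ in Set.Icc a b, Real.exp (-c * s * ρ ^ α) ≤ g s :=
      setIntegral_mono_set hfi (ae_of_all _ fun ρ => (Real.exp_pos _).le)
        hsub.eventuallyLE
    have h2 : ∫ _ρ in Set.Icc a b, Real.exp (-c) ≤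
        ∫ ρ in Set.Icc a b, Real.exp (-c * s * ρ ^ α) := by
      refine setIntegral_mono_on (integrableOn_const measure_Icc_lt_top.ne)
        (hfi.mono_set hsub) measurableSet_Icc ?_
      intro ρ hρ
      have hρ0 : 0 < ρ := lt_of_lt_of_le ha0 hρ.1
      have h3 : ρ ^ α ≤ b ^ α := Real.rpow_le_rpow hρ0.le hρ.2 hα0.le
      have h4 : b ^ α = s⁻¹ := by
        rw [hb_def, ← Real.rpow_mul hs0.le,
          show (-1/α * α : ℝ) = -1 by field_simp, Real.rpow_neg_one]
      rw [Real.exp_le_exp]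
      have h5 : c * s * s⁻¹ = c := by field_simp
      have h6 : c * s * ρ ^ α ≤ c * s * s⁻¹ :=
        mul_le_mul_of_nonneg_left (h4 ▸ h3) (by positivity)
      nlinarith
    have h7 : ∫ _ρ in Set.Icc a b, Real.exp (-c) = (b - a) * Real.exp (-c) := by
      rw [setIntegral_const, Real.volume_real_Icc_of_le (by linarith),
        smul_eq_mul]
    have h8 : Real.exp (-c) / 2 * b ≤ (b - a) * Real.exp (-c) := by
      nlinarith [Real.exp_pos (-c)]
    linarith
  constructor
  · -- case 1 < α
    intro h1α
    have ht2 : (1:ℝ) ≤ t/2 := by linarith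
    have hsub2 : Set.Icc (t/2) t ⊆ Set.Icc 1 t := Set.Icc_subset_Icc ht2 le_rfl
    have houter1 : ∫ s in Set.Icc (t/2) t, g s ≤ ∫ s in Set.Icc 1 t, g s :=
      setIntegral_mono_set (hgi 1 t zero_le_one) (ae_of_all _ hg0) hsub2.eventuallyLE
    have houter2 : ∫ _s in Set.Icc (t/2) t, (Real.exp (-c)/2 * t ^ (-1/α:ℝ)) ≤
        ∫ s in Set.Icc (t/2) t, g s := by
      refine setIntegral_mono_on (integrableOn_const measure_Icc_lt_top.ne)
        ((hgi 1 t zero_le_one).mono_set hsub2) measurableSet_Icc ?_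
      intro s hs
      have hs1 : (1:ℝ) ≤ s := le_trans ht2 hs.1
      have h := hinner s hs1 hs.2
      have h2 : t ^ (-1/α:ℝ) ≤ s ^ (-1/α:ℝ) :=
        Real.rpow_le_rpow_of_nonpos (lt_of_lt_of_le one_pos hs1) hs.2 hneg
      nlinarith [Real.exp_pos (-c)]
    have hconst : ∫ _s in Set.Icc (t/2) t, (Real.exp (-c)/2 * t ^ (-1/α:ℝ)) =
        (t - t/2) * (Real.exp (-c)/2 * t ^ (-1/α:ℝ)) := by
      rw [setIntegral_const, Real.volume_real_Icc_of_le (by linarith),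
        smul_eq_mul]
    have hpow : t ^ (1 - 1/α : ℝ) = t * t ^ (-1/α : ℝ) := by
      rw [show (1 - 1/α : ℝ) = 1 + (-1/α) by ring, Real.rpow_add ht0, Real.rpow_one]
    rw [hpow]
    linarith
  · -- case α = 1
    intro hα1
    have hlog : 0 ≤ Real.log t := Real.log_nonneg (by linarith)
    have hii : IntegrableOn (fun s : ℝ => Real.exp (-c)/2 * s⁻¹) (Set.Icc 1 t) := by
      apply ContinuousOn.integrableOn_compact isCompact_Icc
      exact continuousOn_const.mul (ContinuousOn.inv₀ continuousOn_id fun s hs =>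
        ne_of_gt (lt_of_lt_of_le one_pos hs.1))
    have houter : ∫ s in Set.Icc 1 t, (Real.exp (-c)/2 * s⁻¹) ≤ ∫ s in Set.Icc 1 t, g s := by
      refine setIntegral_mono_on hii (hgi 1 t zero_le_one) measurableSet_Icc ?_
      intro s hs
      have h := hinner s hs.1 hs.2
      rwa [show (-1/α : ℝ) = -1 by rw [hα1]; norm_num, Real.rpow_neg_one] at h
    have hval : ∫ s in Set.Icc 1 t, (Real.exp (-c)/2 * s⁻¹) =
        Real.exp (-c)/2 * Real.log t := by
      rw [integral_Icc_eq_integral_Ioc,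
        ← intervalIntegral.integral_of_le (by linarith : (1:ℝ) ≤ t),
        intervalIntegral.integral_const_mul, integral_inv_of_pos one_pos ht0, div_one]
    nlinarith [mul_nonneg (Real.exp_pos (-c)).le hlog]
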